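/- Multidimensional injectivity of the discrete signature: if x and y are time-warping reduced time-series in ℝ^d with all discrete signature coefficients equal, then they have the same length n and their difference time-series are equal, i.e., x_{j+1} − x_j = y_{j+1} − y_j for all j; hence x and y differ by a constant translation. -/

import Mathlib

open Finset

/-- Evaluation of the monomial with exponent vector `a` at `v ∈ ℝ^d`. -/
noncomputable def mon {d : ℕ} (a : Fin d → ℕ) (v : Fin d → ℝ) : ℝ := ∏ i, v i ^ a i

/-- Discrete signature coefficient of the time-series `x = (x₀, …, x_n)` in `ℝ^d`
associated to the word of monomials `p₁ ⊗ ⋯ ⊗ p_ℓ`: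
`Σ_{1 ≤ i₁ < ⋯ < i_ℓ ≤ n} ∏_k p_k(x_{i_k+1} − x_{i_k})`. -/
noncomputable def dsig {d n ℓ : ℕ} (x : Fin (n + 1) → Fin d → ℝ)
    (p : Fin ℓ → Fin d → ℕ) : ℝ :=
  ∑ i ∈ Finset.univ.filter (fun i : Fin ℓ → Fin n => ∀ a b : Fin ℓ, a < b → i a < i b),
    ∏ k, mon (p k) (x (i k).succ - x (i k).castSucc)

lemma mon_single {d : ℕ} (j : Fin d) (e : ℕ) (v : Fin d → ℝ) :
    mon (Pi.single j e) v = v j ^ e := by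
  unfold mon
  rw [Finset.prod_eq_single j]
  · rw [Pi.single_eq_same]
  · intro i _ hij
    rw [Pi.single_eq_of_ne hij, pow_zero]
  · simp

lemma single_ne_zero' {d : ℕ} (j : Fin d) (e : ℕ) (he : e ≠ 0) :
    (Pi.single j e : Fin d → ℕ) ≠ 0 := by
  intro h
  have := congrFun h j
  rw [Pi.single_eq_same] at this
  exact he this

/-- The only strictly monotone self-map of `Fin n` is the identity. -/
lemma strictMono_fin_self {n : ℕ} (f : Fin n → Fin n) (hf : StrictMono f) : f = id := by
  apply (hf.range_inj strictMono_id).mp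
  have hinj : Function.Injective f := hf.injective
  have hsurj : Function.Surjective f := Finite.surjective_of_injective hinj
  rw [Set.range_id, Set.range_eq_univ]
  exact hsurj

lemma dsig_self {d n : ℕ} (x : Fin (n + 1) → Fin d → ℝ) (p : Fin n → Fin d → ℕ) :
    dsig x p = ∏ k, mon (p k) (x k.succ - x k.castSucc) := by
  unfold dsig
  rw [show (Finset.univ.filter
      (fun i : Fin n → Fin n => ∀ a b : Fin n, a < b → i a < i b)) = {id} by
    ext i
    simp only [Finset.mem_filter, Finset.mem_univ, true_and, Finset.mem_singleton]
    constructor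
    · intro h
      exact strictMono_fin_self i (fun a b hab => h a b hab)
    · rintro rfl
      exact fun a b hab => hab]
  simp

lemma dsig_zero {d n ℓ : ℕ} (h : n < ℓ) (x : Fin (n + 1) → Fin d → ℝ)
    (p : Fin ℓ → Fin d → ℕ) : dsig x p = 0 := by
  unfold dsig
  rw [Finset.filter_false_of_mem, Finset.sum_empty]
  intro i _ hi
  have hinj : Function.Injective i := by
    intro a b hab
    by_contra hne
    rcases lt_or_gt_of_ne hne with h' | h'
    · exact absurd hab (hi a b h').ne
    · exact absurd hab.symm (hi b a h').ne
  have := Fintype.card_le_of_injective i hinj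
  simp only [Fintype.card_fin] at this
  omega

/-- Key algebraic step: if all monomial-word products agree and all vectors are
nonzero, the vectors agree coordinatewise (one direction). -/
lemma eq_of_products {n d : ℕ} (u w : Fin n → Fin d → ℝ)
    (hu : ∀ k, u k ≠ 0)
    (K : ∀ p : Fin n → Fin d → ℕ, (∀ k, p k ≠ 0) →
      ∏ k, mon (p k) (u k) = ∏ k, mon (p k) (w k)) :
    ∀ (j : Fin n) (i : Fin d), u j i ≠ 0 → u j i = w j i := by
  intro j i hji
  -- choose a nonzero coordinate for each position, forcing coordinate i at j
  have hc : ∀ k, ∃ c : Fin d, u k c ≠ 0 := by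
    intro k
    exact Function.ne_iff.mp (hu k)
  choose c0 hc0 using hc
  set c : Fin n → Fin d := Function.update c0 j i with hcdef
  have hc' : ∀ k, u k (c k) ≠ 0 := by
    intro k
    by_cases hk : k = j
    · subst hk; simpa [hcdef, Function.update_self] using hji
    · simpa [hcdef, Function.update_of_ne hk] using hc0 k
  -- degree-1 word
  have h1 := K (fun k => Pi.single (c k) 1)
    (fun k => single_ne_zero' (c k) 1 one_ne_zero)
  simp only [mon_single, pow_one] at h1
  -- word with exponent 2 at position j
  have h2 := K (fun k => Pi.single (c k) (if k = j then 2 else 1))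
    (fun k => single_ne_zero' _ _ (by split <;> omega))
  simp only [mon_single] at h2
  have expand : ∀ t : Fin n → ℝ,
      (∏ k, t k ^ (if k = j then 2 else 1)) = t j * ∏ k, t k := by
    intro t
    rw [← Finset.mul_prod_erase Finset.univ _ (Finset.mem_univ j),
        ← Finset.mul_prod_erase Finset.univ t (Finset.mem_univ j)]
    have hjj : (if j = j then 2 else 1) = 2 := if_pos rfl
    rw [hjj, Finset.prod_congr rfl (fun k hk => by
      rw [if_neg (Finset.ne_of_mem_erase hk), pow_one])]
    ring
  rw [expand, expand] at h2
  have hA : (∏ k, u k (c k)) ≠ 0 := Finset.prod_ne_zero_iff.mpr (fun k _ => hc' k)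
  rw [← h1] at h2
  have hcj : c j = i := by simp [hcdef]
  have := mul_right_cancel₀ hA h2
  rwa [hcj] at this

/-- multidimensional injectivity of the discrete signature on
time-warping reduced time-series: equal signatures force equal lengths and equal
difference time-series (so the series differ by a constant translation). -/
theorem dsig_injective_twr (d n m : ℕ)
    (x : Fin (n + 1) → Fin d → ℝ) (y : Fin (m + 1) → Fin d → ℝ)
    (hx : ∀ j : Fin n, x j.succ ≠ x j.castSucc)
    (hy : ∀ j : Fin m, y j.succ ≠ y j.castSucc)
    (hsig : ∀ (ℓ : ℕ) (p : Fin ℓ → Fin d → ℕ), (∀ k, p k ≠ 0) → dsig x p = dsig y p) :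
    ∃ h : n = m, ∀ j : Fin n,
      x j.succ - x j.castSucc =
        y (Fin.cast (congrArg Nat.succ h) j.succ) -
          y (Fin.cast (congrArg Nat.succ h) j.castSucc) := by
  set u : Fin n → Fin d → ℝ := fun j => x j.succ - x j.castSucc with hudef
  set w : Fin m → Fin d → ℝ := fun j => y j.succ - y j.castSucc with hwdef
  have hu : ∀ k, u k ≠ 0 := fun k => sub_ne_zero.mpr (hx k)
  have hw : ∀ k, w k ≠ 0 := fun k => sub_ne_zero.mpr (hy k)
  have hcu : ∀ k, ∃ c : Fin d, u k c ≠ 0 := fun k => Function.ne_iff.mp (hu k)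
  have hcw : ∀ k, ∃ c : Fin d, w k c ≠ 0 := fun k => Function.ne_iff.mp (hw k)
  choose cu hcu' using hcu
  choose cw hcw' using hcw
  -- lengths are equal
  have hnm : n = m := by
    by_contra hne
    rcases Nat.lt_or_ge n m with h | h
    · have hs := hsig m (fun k => Pi.single (cw k) 1)
        (fun k => single_ne_zero' _ 1 one_ne_zero)
      rw [dsig_zero h, dsig_self] at hs
      simp only [mon_single, pow_one] at hs
      exact (Finset.prod_ne_zero_iff.mpr (fun k _ => hcw' k)) hs.symm
    · have h' : m < n := by omega
      have hs := hsig n (fun k => Pi.single (cu k) 1)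
        (fun k => single_ne_zero' _ 1 one_ne_zero)
      rw [dsig_self, dsig_zero h'] at hs
      simp only [mon_single, pow_one] at hs
      exact (Finset.prod_ne_zero_iff.mpr (fun k _ => hcu' k)) hs
  subst hnm
  refine ⟨rfl, ?_⟩
  -- products over all degree-n words agree
  have K : ∀ p : Fin n → Fin d → ℕ, (∀ k, p k ≠ 0) →
      ∏ k, mon (p k) (u k) = ∏ k, mon (p k) (w k) := by
    intro p hp
    have := hsig n p hp
    rwa [dsig_self, dsig_self] at this
  have K' : ∀ p : Fin n → Fin d → ℕ, (∀ k, p k ≠ 0) →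
      ∏ k, mon (p k) (w k) = ∏ k, mon (p k) (u k) := fun p hp => (K p hp).symm
  have fwd := eq_of_products u w hu K
  have bwd := eq_of_products w u hw K'
  intro j
  have : u j = w j := by
    funext i
    by_cases h1 : u j i ≠ 0
    · exact fwd j i h1
    · by_cases h2 : w j i ≠ 0
      · exact (bwd j i h2).symm
      · push_neg at h1 h2
        rw [h1, h2]
  simpa [hudef, hwdef] using this
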